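/- Let m and n be coprime positive integers, let d′ be a positive integer, and let g ∈ ℂ[[X,Y]] be a formal power series in two variables such that every monomial X^a·Y^b occurring in g with nonzero coefficient satisfies m·a + n·b > m·n·d′. Set f = (Y^m − X^n)^{d′} + g. Let x, y ∈ ℂ[[t]] be power series with zero constant term, not both zero, and assume there is no positive integer p such that ord x = m·p, ord y = n·p, and the leading coefficients x₀ of x and y₀ of y satisfy y₀^m = x₀^n. Then ord( f(x,y) − (y^m − x^n)^{d′} ) > ord( (y^m − x^n)^{d′} ); in particular f(x,y) and (y^m − x^n)^{d′} have the same order and the same leading coefficient. -/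

import Mathlib

open PowerSeries

/-- Evaluation `F(x,y)` of a two-variable formal power series `F ∈ ℂ[[X,Y]]` at a pair of
one-variable power series `x, y ∈ ℂ[[t]]`.  (The formula below computes the correct
substitution whenever `x` and `y` have zero constant term: the coefficient of `t^k` in
`F(x,y)` only receives contributions from monomials `X^a·Y^b` with `a + b ≤ k`, and in
particular with `a ≤ k` and `b ≤ k`.) -/
noncomputable def mvEval (F : MvPowerSeries (Fin 2) ℂ) (x y : PowerSeries ℂ) :
    PowerSeries ℂ :=
  PowerSeries.mk fun k =>
    ∑ ab ∈ Finset.range (k + 1) ×ˢ Finset.range (k + 1),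
      MvPowerSeries.coeff (Finsupp.single 0 ab.1 + Finsupp.single 1 ab.2) F *
        PowerSeries.coeff k (x ^ ab.1 * y ^ ab.2)

lemma aux_one (x : PowerSeries ℂ) (u a k : ℕ)
    (hx : ∀ i < u, PowerSeries.coeff i x = 0) (hk : k < a * u) :
    PowerSeries.coeff k (x ^ a) = 0 := by
  have hx' : (X : ℂ⟦X⟧) ^ u ∣ x := X_pow_dvd_iff.mpr hx
  have : (X : ℂ⟦X⟧) ^ (a * u) ∣ x ^ a := by
    rw [mul_comm, pow_mul]
    exact pow_dvd_pow_of_dvd hx' a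
  exact X_pow_dvd_iff.mp this k hk

lemma aux_two (x y : PowerSeries ℂ) (u v a b k : ℕ)
    (hx : ∀ i < u, PowerSeries.coeff i x = 0)
    (hy : ∀ i < v, PowerSeries.coeff i y = 0) (hk : k < a * u + b * v) :
    PowerSeries.coeff k (x ^ a * y ^ b) = 0 := by
  have hx' : (X : ℂ⟦X⟧) ^ u ∣ x := X_pow_dvd_iff.mpr hx
  have hy' : (X : ℂ⟦X⟧) ^ v ∣ y := X_pow_dvd_iff.mpr hy
  have : (X : ℂ⟦X⟧) ^ (a * u + b * v) ∣ x ^ a * y ^ b := by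
    rw [pow_add, mul_comm a u, mul_comm b v, pow_mul, pow_mul]
    exact mul_dvd_mul (pow_dvd_pow_of_dvd hx' a) (pow_dvd_pow_of_dvd hy' b)
  exact X_pow_dvd_iff.mp this k hk

lemma aux_lead (φ : PowerSeries ℂ) (j : ℕ) (h : ∀ i < j, PowerSeries.coeff i φ = 0)
    (a : ℕ) : PowerSeries.coeff (a * j) (φ ^ a) = (PowerSeries.coeff j φ) ^ a := by
  induction a with
  | zero => simp
  | succ a ih =>
    rw [pow_succ, PowerSeries.coeff_mul]
    rw [Finset.sum_eq_single ((a * j : ℕ), j)]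
    · rw [ih, pow_succ]
    · rintro ⟨p, q⟩ hpq hne
      rw [Finset.HasAntidiagonal.mem_antidiagonal] at hpq
      have hpq' : p + q = a * j + j := by rw [hpq]; ring
      rcases lt_or_ge p (a * j) with hp | hp
      · rw [aux_one φ j a p h hp, zero_mul]
      · have hq : q < j := by
          rcases lt_or_eq_of_le hp with hp' | hp'
          · omega
          · exfalso; apply hne
            have : q = j := by omega
            simp [hp'.symm, this]
        rw [h q hq, mul_zero]
    · intro hmem
      exfalso; apply hmem; rw [Finset.HasAntidiagonal.mem_antidiagonal]; ring

lemma mvEval_add (F G : MvPowerSeries (Fin 2) ℂ) (x y : PowerSeries ℂ) :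
    mvEval (F + G) x y = mvEval F x y + mvEval G x y := by
  ext k
  simp [mvEval, add_mul, Finset.sum_add_distrib]

lemma mvEval_sum {ι : Type*} (s : Finset ι) (F : ι → MvPowerSeries (Fin 2) ℂ)
    (x y : PowerSeries ℂ) :
    mvEval (∑ i ∈ s, F i) x y = ∑ i ∈ s, mvEval (F i) x y := by
  ext k
  simp only [mvEval, coeff_mk, map_sum, Finset.sum_mul]
  rw [Finset.sum_comm]

lemma finsupp_eq_iff (a b a' b' : ℕ) :
    (Finsupp.single (0 : Fin 2) a + Finsupp.single 1 b =
      Finsupp.single (0 : Fin 2) a' + Finsupp.single 1 b') ↔ (a = a' ∧ b = b') := by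
  constructor
  · intro h
    constructor
    · have := DFunLike.congr_fun h 0
      simpa using this
    · have := DFunLike.congr_fun h 1
      simpa using this
  · rintro ⟨rfl, rfl⟩; rfl

lemma mvEval_monomial (x y : PowerSeries ℂ)
    (hx0 : PowerSeries.constantCoeff x = 0) (hy0 : PowerSeries.constantCoeff y = 0)
    (a b : ℕ) (c : ℂ) :
    mvEval (MvPowerSeries.monomial (Finsupp.single 0 a + Finsupp.single 1 b) c) x y =
      PowerSeries.C c * (x ^ a * y ^ b) := by
  have hx : ∀ i < 1, PowerSeries.coeff i x = 0 := by
    intro i hi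
    interval_cases i
    simpa using hx0
  have hy : ∀ i < 1, PowerSeries.coeff i y = 0 := by
    intro i hi
    interval_cases i
    simpa using hy0
  ext k
  rw [mvEval, coeff_mk, PowerSeries.coeff_C_mul]
  rw [Finset.sum_eq_single ((a, b) : ℕ × ℕ)]
  · rw [MvPowerSeries.coeff_monomial_same]
  · rintro ⟨a', b'⟩ _ hne
    have hne' : (Finsupp.single (0 : Fin 2) a' + Finsupp.single 1 b') ≠
        (Finsupp.single (0 : Fin 2) a + Finsupp.single 1 b) := by
      rw [Ne, finsupp_eq_iff]
      rintro ⟨rfl, rfl⟩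
      exact hne rfl
    rw [MvPowerSeries.coeff_monomial_ne hne', zero_mul]
  · intro hmem
    simp only [Finset.mem_product, Finset.mem_range, not_and_or, not_lt] at hmem
    rw [MvPowerSeries.coeff_monomial_same]
    rw [aux_two x y 1 1 a b k hx hy (by omega), mul_zero]

lemma mvEval_key (m n d' : ℕ) (x y : PowerSeries ℂ)
    (hx0 : PowerSeries.constantCoeff x = 0) (hy0 : PowerSeries.constantCoeff y = 0) :
    mvEval ((MvPowerSeries.X 1 ^ m - MvPowerSeries.X 0 ^ n) ^ d') x y =
      (y ^ m - x ^ n) ^ d' := by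
  rw [sub_pow, sub_pow, mvEval_sum]
  apply Finset.sum_congr rfl
  intro i _
  have hterm : (-1 : MvPowerSeries (Fin 2) ℂ) ^ (i + d') * (MvPowerSeries.X 1 ^ m) ^ i *
      (MvPowerSeries.X 0 ^ n) ^ (d' - i) * (d'.choose i : MvPowerSeries (Fin 2) ℂ) =
      MvPowerSeries.monomial (Finsupp.single 0 (n * (d' - i)) + Finsupp.single 1 (m * i))
        ((-1) ^ (i + d') * (d'.choose i : ℂ)) := by
    rw [← pow_mul, ← pow_mul, MvPowerSeries.X_pow_eq, MvPowerSeries.X_pow_eq]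
    have h1 : (-1 : MvPowerSeries (Fin 2) ℂ) ^ (i + d') =
        MvPowerSeries.monomial (0 : Fin 2 →₀ ℕ) ((-1 : ℂ) ^ (i + d')) := by
      rw [MvPowerSeries.monomial_zero_eq_C_apply, map_pow, map_neg, map_one]
    have h2 : (d'.choose i : MvPowerSeries (Fin 2) ℂ) =
        MvPowerSeries.monomial (0 : Fin 2 →₀ ℕ) ((d'.choose i : ℂ)) := by
      rw [MvPowerSeries.monomial_zero_eq_C_apply, map_natCast]
    rw [h1, h2, MvPowerSeries.monomial_mul_monomial, MvPowerSeries.monomial_mul_monomial,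
      MvPowerSeries.monomial_mul_monomial]
    congr 1
    · simp [add_comm]
    · ring
  rw [hterm, mvEval_monomial x y hx0 hy0]
  have h1 : PowerSeries.C ((-1) ^ (i + d') * (d'.choose i : ℂ)) =
      (-1 : PowerSeries ℂ) ^ (i + d') * (d'.choose i : PowerSeries ℂ) := by
    rw [map_mul, map_pow, map_neg, map_one, map_natCast]
  rw [h1, ← pow_mul, ← pow_mul]
  ring
lemma claim (m n : ℕ) (hm : 0 < m) (hn : 0 < n) (hmn : Nat.Coprime m n)
    (x y : PowerSeries ℂ)
    (hx0 : PowerSeries.constantCoeff x = 0) (hy0 : PowerSeries.constantCoeff y = 0)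
    (hxy : ¬(x = 0 ∧ y = 0))
    (hnoC : ¬ ∃ p : ℕ, 0 < p ∧ x.order = (m * p : ℕ) ∧ y.order = (n * p : ℕ) ∧
        (PowerSeries.coeff (n * p) y) ^ m = (PowerSeries.coeff (m * p) x) ^ n) :
    ∃ μ u v : ℕ, 0 < μ ∧ μ ≤ n * u ∧ μ ≤ m * v ∧
      (∀ i < u, PowerSeries.coeff i x = 0) ∧ (∀ i < v, PowerSeries.coeff i y = 0) ∧
      (∀ i < μ, PowerSeries.coeff i (y ^ m - x ^ n) = 0) ∧
      PowerSeries.coeff μ (y ^ m - x ^ n) ≠ 0 := by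
  by_cases hx : x = 0
  · have hy : y ≠ 0 := fun h => hxy ⟨hx, h⟩
    obtain ⟨oy, hoy⟩ := WithTop.ne_top_iff_exists.mp (PowerSeries.order_eq_top.not.mpr hy)
    obtain ⟨hylead, hyvan⟩ := PowerSeries.order_eq_nat.mp hoy.symm
    have hoy1 : 1 ≤ oy := by
      rcases Nat.eq_zero_or_pos oy with h0 | h0
      · exfalso; apply hylead; rw [h0, PowerSeries.coeff_zero_eq_constantCoeff]; exact hy0
      · exact h0
    refine ⟨m * oy, m * oy, oy, by positivity, Nat.le_mul_of_pos_left _ hn, le_refl _,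
      ?_, hyvan, ?_, ?_⟩
    · intro i _; rw [hx, map_zero]
    · intro i hi
      rw [hx, zero_pow hn.ne', sub_zero]
      exact aux_one y oy m i hyvan hi
    · rw [hx, zero_pow hn.ne', sub_zero, aux_lead y oy hyvan m]
      exact pow_ne_zero _ hylead
  · by_cases hy : y = 0
    · obtain ⟨ox, hox⟩ := WithTop.ne_top_iff_exists.mp (PowerSeries.order_eq_top.not.mpr hx)
      obtain ⟨hxlead, hxvan⟩ := PowerSeries.order_eq_nat.mp hox.symm
      have hox1 : 1 ≤ ox := by
        rcases Nat.eq_zero_or_pos ox with h0 | h0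
        · exfalso; apply hxlead; rw [h0, PowerSeries.coeff_zero_eq_constantCoeff]; exact hx0
        · exact h0
      refine ⟨n * ox, ox, n * ox, by positivity, le_refl _, Nat.le_mul_of_pos_left _ hm,
        hxvan, ?_, ?_, ?_⟩
      · intro i _; rw [hy, map_zero]
      · intro i hi
        rw [hy, zero_pow hm.ne', zero_sub, map_neg, aux_one x ox n i hxvan hi, neg_zero]
      · rw [hy, zero_pow hm.ne', zero_sub, map_neg, aux_lead x ox hxvan n]
        exact neg_ne_zero.mpr (pow_ne_zero _ hxlead)
    · obtain ⟨ox, hox⟩ := WithTop.ne_top_iff_exists.mp (PowerSeries.order_eq_top.not.mpr hx)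
      obtain ⟨hxlead, hxvan⟩ := PowerSeries.order_eq_nat.mp hox.symm
      obtain ⟨oy, hoy⟩ := WithTop.ne_top_iff_exists.mp (PowerSeries.order_eq_top.not.mpr hy)
      obtain ⟨hylead, hyvan⟩ := PowerSeries.order_eq_nat.mp hoy.symm
      have hox1 : 1 ≤ ox := by
        rcases Nat.eq_zero_or_pos ox with h0 | h0
        · exfalso; apply hxlead; rw [h0, PowerSeries.coeff_zero_eq_constantCoeff]; exact hx0
        · exact h0
      have hoy1 : 1 ≤ oy := by
        rcases Nat.eq_zero_or_pos oy with h0 | h0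
        · exfalso; apply hylead; rw [h0, PowerSeries.coeff_zero_eq_constantCoeff]; exact hy0
        · exact h0
      refine ⟨min (m * oy) (n * ox), ox, oy, by positivity,
        le_trans (min_le_right _ _) (le_refl _), min_le_left _ _, hxvan, hyvan, ?_, ?_⟩
      · intro i hi
        rw [map_sub, aux_one y oy m i hyvan (lt_of_lt_of_le hi (min_le_left _ _)),
          aux_one x ox n i hxvan (lt_of_lt_of_le hi (min_le_right _ _)), sub_zero]
      · rcases lt_trichotomy (m * oy) (n * ox) with hlt | heq | hgt
        · rw [min_eq_left hlt.le, map_sub, aux_lead y oy hyvan m,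
            aux_one x ox n (m * oy) hxvan hlt, sub_zero]
          exact pow_ne_zero _ hylead
        · intro hzero
          rw [min_eq_left heq.le, map_sub, aux_lead y oy hyvan m, heq,
            aux_lead x ox hxvan n, sub_eq_zero] at hzero
          have hdvd : n ∣ oy := by
            have h1 : n ∣ m * oy := ⟨ox, heq⟩
            exact (Nat.Coprime.dvd_of_dvd_mul_left (hmn.symm) h1)
          obtain ⟨p, hp⟩ := hdvd
          have hoxp : ox = m * p := by
            have : m * (n * p) = n * ox := by rw [← hp]; exact heq
            have h2 : n * (m * p) = n * ox := by rw [← this]; ring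
            exact (Nat.eq_of_mul_eq_mul_left hn h2).symm
          have hp0 : 0 < p := by
            rcases Nat.eq_zero_or_pos p with h0 | h0
            · rw [h0, mul_zero] at hp; omega
            · exact h0
          apply hnoC
          exact ⟨p, hp0, by rw [← hox, hoxp]; rfl, by rw [← hoy, hp]; rfl,
            by rw [← hp, ← hoxp]; exact hzero⟩
        · rw [min_eq_right hgt.le, map_sub, aux_one y oy m (n * ox) hyvan hgt,
            aux_lead x ox hxvan n, zero_sub]
          exact neg_ne_zero.mpr (pow_ne_zero _ hxlead)


/-- Let `m` and `n` be coprime positive integers, let `d′` be a positive integer, and let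
`g ∈ ℂ[[X,Y]]` be such that every monomial `X^a·Y^b` occurring in `g` with nonzero
coefficient satisfies `m·a + n·b > m·n·d′`.  Set `f = (Y^m − X^n)^{d′} + g`.  Let
`x, y ∈ ℂ[[t]]` have zero constant term, not both zero, and assume there is no positive
integer `p` such that `ord x = m·p`, `ord y = n·p` and the leading coefficients satisfy
`y₀^m = x₀^n`.  Then `ord(f(x,y) − (y^m − x^n)^{d′}) > ord((y^m − x^n)^{d′})`; in
particular `f(x,y)` and `(y^m − x^n)^{d′}` have the same order and the same leading
coefficient. -/
theorem stmt6 (m n d' : ℕ) (hm : 0 < m) (hn : 0 < n) (hmn : Nat.Coprime m n)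
    (hd' : 0 < d')
    (g : MvPowerSeries (Fin 2) ℂ)
    (hg : ∀ d : Fin 2 →₀ ℕ, MvPowerSeries.coeff d g ≠ 0 →
        m * n * d' < m * d 0 + n * d 1)
    (f : MvPowerSeries (Fin 2) ℂ)
    (hf : f = (MvPowerSeries.X 1 ^ m - MvPowerSeries.X 0 ^ n) ^ d' + g)
    (x y : PowerSeries ℂ)
    (hx0 : PowerSeries.constantCoeff x = 0) (hy0 : PowerSeries.constantCoeff y = 0)
    (hxy : ¬(x = 0 ∧ y = 0))
    (hnoC : ¬ ∃ p : ℕ, 0 < p ∧ x.order = (m * p : ℕ) ∧ y.order = (n * p : ℕ) ∧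
        (PowerSeries.coeff (n * p) y) ^ m = (PowerSeries.coeff (m * p) x) ^ n) :
    ((y ^ m - x ^ n) ^ d').order < (mvEval f x y - (y ^ m - x ^ n) ^ d').order ∧
    (mvEval f x y).order = ((y ^ m - x ^ n) ^ d').order ∧
    ∀ N : ℕ, ((y ^ m - x ^ n) ^ d').order = N →
      PowerSeries.coeff N (mvEval f x y) =
        PowerSeries.coeff N ((y ^ m - x ^ n) ^ d') := by
  obtain ⟨μ, u, v, hμ, hμu, hμv, hxu, hyv, hwvan, hwne⟩ :=
    claim m n hm hn hmn x y hx0 hy0 hxy hnoC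
  have hOrd : ((y ^ m - x ^ n) ^ d').order = ((d' * μ : ℕ) : ℕ∞) := by
    rw [PowerSeries.order_eq_nat]
    constructor
    · rw [aux_lead _ μ hwvan d']
      exact pow_ne_zero _ hwne
    · intro i hi
      exact aux_one _ μ d' i hwvan hi
  have hgcoeff : ∀ k ≤ d' * μ, PowerSeries.coeff k (mvEval g x y) = 0 := by
    intro k hk
    rw [mvEval, coeff_mk]
    apply Finset.sum_eq_zero
    rintro ⟨a, b⟩ _
    by_cases hc : MvPowerSeries.coeff (Finsupp.single 0 a + Finsupp.single 1 b) g = 0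
    · rw [hc, zero_mul]
    · have hab := hg _ hc
      have ha : ((Finsupp.single (0 : Fin 2) a + Finsupp.single 1 b : Fin 2 →₀ ℕ)) 0 = a := by
        simp
      have hb : ((Finsupp.single (0 : Fin 2) a + Finsupp.single 1 b : Fin 2 →₀ ℕ)) 1 = b := by
        simp
      rw [ha, hb] at hab
      have hklt : k < a * u + b * v := by
        have h1 : m * n * k ≤ m * n * (d' * μ) := Nat.mul_le_mul_left _ hk
        have h2 : m * n * (d' * μ) < (m * a + n * b) * μ := by
          calc m * n * (d' * μ) = (m * n * d') * μ := by ring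
          _ < (m * a + n * b) * μ := (Nat.mul_lt_mul_right hμ).mpr hab
        have h3 : (m * a + n * b) * μ ≤ m * n * (a * u + b * v) := by
          calc (m * a + n * b) * μ = m * a * μ + n * b * μ := by ring
          _ ≤ m * a * (n * u) + n * b * (m * v) :=
              Nat.add_le_add (Nat.mul_le_mul_left _ hμu) (Nat.mul_le_mul_left _ hμv)
          _ = m * n * (a * u + b * v) := by ring
        have := lt_of_le_of_lt h1 (lt_of_lt_of_le h2 h3)
        exact Nat.lt_of_mul_lt_mul_left this
      rw [aux_two x y u v a b k hxu hyv hklt, mul_zero]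
  have heval : mvEval f x y = (y ^ m - x ^ n) ^ d' + mvEval g x y := by
    rw [hf, mvEval_add, mvEval_key m n d' x y hx0 hy0]
  have hsub : mvEval f x y - (y ^ m - x ^ n) ^ d' = mvEval g x y := by
    rw [heval]; ring
  have hge : ((d' * μ : ℕ) : ℕ∞) < (mvEval g x y).order := by
    have h1 : ((d' * μ + 1 : ℕ) : ℕ∞) ≤ (mvEval g x y).order :=
      PowerSeries.nat_le_order _ _ (fun i hi => hgcoeff i (by omega))
    refine lt_of_lt_of_le ?_ h1
    exact_mod_cast Nat.lt_succ_self _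
  refine ⟨?_, ?_, ?_⟩
  · rw [hsub, hOrd]
    exact hge
  · rw [heval, PowerSeries.order_add_of_order_ne _ _ (by rw [hOrd]; exact ne_of_lt hge),
      hOrd, min_eq_left (le_of_lt hge)]
  · intro N hN
    have hNμ : N = d' * μ := by
      rw [hOrd] at hN
      exact_mod_cast hN.symm
    rw [heval, map_add, hgcoeff N (le_of_eq hNμ), add_zero]
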